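/- Let ℓ be a prime number, let G ⊆ GL₂(ℤ_ℓ) be a closed subgroup, and let β ≥ 0 be an integer. If for every integer γ with β ≤ γ ≤ max{β, α_ℓ} one has ker(GL₂(ℤ/ℓ^{γ+1}ℤ) → GL₂(ℤ/ℓ^γℤ)) ⊆ G(ℓ^{γ+1}), then ker(GL₂(ℤ_ℓ) → GL₂(ℤ/ℓ^βℤ)) ⊆ G. -/

import Mathlib

set_option synthInstance.maxHeartbeats 1000000
set_option maxHeartbeats 1600000
set_option linter.unusedSectionVars false
set_option linter.unusedVariables false

open scoped MatrixGroups

/-- `α_ℓ`: 2 if `ℓ = 2`, and 1 if `ℓ ≥ 3`. -/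
def alphaExp (ℓ : ℕ) : ℕ := if ℓ = 2 then 2 else 1

/-- The map `GL₂(R) → GL₂(S)` induced by a ring homomorphism `R →+* S`. -/
abbrev glMap {R S : Type*} [CommRing R] [CommRing S] (f : R →+* S) :
    GL (Fin 2) R →* GL (Fin 2) S := Matrix.GeneralLinearGroup.map f

section Aux

variable {ℓ : ℕ} [Fact ℓ.Prime]

lemma glMap_val {R S : Type*} [CommRing R] [CommRing S] (f : R →+* S) (u : GL (Fin 2) R) :
    (glMap f u).val = u.val.map f := by
  simp [glMap, Matrix.GeneralLinearGroup.map, Units.coe_map, RingHom.mapMatrix_apply]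

lemma map_smul'' {R S : Type*} [CommRing R] [CommRing S] (f : R →+* S) (r : R)
    (A : Matrix (Fin 2) (Fin 2) R) : (r • A).map f = f r • A.map f := by
  ext i j
  simp [Matrix.map_apply]

lemma mem_K_iff (n : ℕ) (u : GL (Fin 2) ℤ_[ℓ]) :
    u ∈ (glMap (PadicInt.toZModPow (p := ℓ) n)).ker ↔
    ∀ i j, ((ℓ : ℤ_[ℓ]) ^ n) ∣ (u.val i j - (1 : Matrix (Fin 2) (Fin 2) ℤ_[ℓ]) i j) := by
  rw [MonoidHom.mem_ker]
  constructor
  · intro hu i j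
    have := congrArg Units.val hu
    rw [glMap_val] at this
    have h2 : PadicInt.toZModPow (p := ℓ) n (u.val i j - (1 : Matrix (Fin 2) (Fin 2) ℤ_[ℓ]) i j) = 0 := by
      have h3 : (u.val.map (PadicInt.toZModPow (p := ℓ) n)) i j
          = (1 : Matrix (Fin 2) (Fin 2) (ZMod (ℓ ^ n))) i j := by rw [this, Units.val_one]
      simp only [Matrix.map_apply] at h3
      rw [map_sub, h3]
      by_cases hij : i = j <;> simp [Matrix.one_apply, hij]
    have := (RingHom.mem_ker).2 h2
    rw [PadicInt.ker_toZModPow, Ideal.mem_span_singleton] at this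
    exact this
  · intro hu
    refine Units.ext ?_
    rw [glMap_val, Units.val_one]
    ext i j
    have := hu i j
    rw [← Ideal.mem_span_singleton, ← PadicInt.ker_toZModPow, RingHom.mem_ker, map_sub,
      sub_eq_zero] at this
    simp only [Matrix.map_apply, this]
    by_cases hij : i = j <;> simp [Matrix.one_apply, hij]

lemma key_pow {S : Type*} [Ring S] {ℓ n : ℕ} (hℓ : ℓ.Prime) (hn : 1 ≤ n)
    (h2 : ℓ = 2 → 2 ≤ n) (P a b : S) (hcomm : ∀ s : S, Commute P s)
    (hP0 : P ^ (n + 2) = 0) (hcast : (ℓ : S) = P) :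
    ((1 + P ^ n * a) * (1 + P ^ (n + 1) * b)) ^ ℓ = 1 + P ^ (n + 1) * a := by
  have hdvd : ∀ i : ℕ, 2 ≤ i → ℓ ^ (n + 2) ∣ Nat.choose ℓ i * ℓ ^ (n * i) := by
    intro i hi
    by_cases hni : n + 2 ≤ n * i
    · exact Dvd.dvd.mul_left (pow_dvd_pow ℓ hni) _
    · push_neg at hni
      have hn1 : n = 1 := by nlinarith
      have hi2 : i = 2 := by nlinarith
      have hl2 : ℓ ≠ 2 := fun hl => by omega
      have hlt : i < ℓ := by
        have := hℓ.two_le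
        omega
      have hc : ℓ ∣ Nat.choose ℓ i := Nat.Prime.dvd_choose_self hℓ (by omega) hlt
      subst hn1 hi2
      calc ℓ ^ (1 + 2) = ℓ * ℓ ^ (1 * 2) := by ring
      _ ∣ Nat.choose ℓ 2 * ℓ ^ (1 * 2) := mul_dvd_mul_right hc _
  have hPzero : ∀ m : ℕ, n + 2 ≤ m → P ^ m = 0 := fun m hm => by
    rw [show m = (n + 2) + (m - (n + 2)) by omega, pow_add, hP0, zero_mul]
  have hCP : ∀ i : ℕ, 2 ≤ i → (Nat.choose ℓ i : S) * P ^ (n * i) = 0 := by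
    intro i hi
    obtain ⟨q, hq⟩ := hdvd i hi
    have h5 : (Nat.choose ℓ i : S) * P ^ (n * i) = ((Nat.choose ℓ i * ℓ ^ (n * i) : ℕ) : S) := by
      push_cast [hcast]
      rfl
    rw [h5, hq]
    push_cast [hcast]
    rw [hP0, zero_mul]
  set c : S := a + P * b + P ^ (n + 1) * (a * b) with hc
  have h1 : a * P ^ (n + 1) = P ^ (n + 1) * a := ((hcomm a).pow_left (n + 1)).eq.symm
  have expand : (1 + P ^ n * a) * (1 + P ^ (n + 1) * b) = 1 + P ^ n * c := by
    calc (1 + P ^ n * a) * (1 + P ^ (n + 1) * b)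
        = 1 + P ^ (n + 1) * b + P ^ n * a + P ^ n * (a * P ^ (n + 1)) * b := by noncomm_ring
      _ = 1 + P ^ (n + 1) * b + P ^ n * a + P ^ n * (P ^ (n + 1) * a) * b := by rw [h1]
      _ = 1 + P ^ n * c := by rw [hc]; noncomm_ring
  rw [expand]
  have hcP : Commute (P ^ n) c := (hcomm c).pow_left n
  have hX : Commute (P ^ n * c) 1 := Commute.one_right _
  rw [add_comm (1 : S) (P ^ n * c), Commute.add_pow hX]
  obtain ⟨L, rfl⟩ : ∃ L, ℓ = L + 2 := ⟨ℓ - 2, by have := hℓ.two_le; omega⟩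
  rw [Finset.sum_range_succ']
  rw [Finset.sum_range_succ']
  have hterm : ∀ x ∈ Finset.range (L + 1),
      (P ^ n * c) ^ (x + 1 + 1) * 1 ^ (L + 2 - (x + 1 + 1)) * ((L + 2).choose (x + 1 + 1) : S)
        = 0 := by
    intro x _
    rw [one_pow, mul_one, hcP.mul_pow, ← pow_mul]
    rw [mul_assoc, ((Nat.cast_commute ((L + 2).choose (x + 2)) (c ^ (x + 2))).symm).eq,
      ← mul_assoc, ((Nat.cast_commute ((L + 2).choose (x + 2)) (P ^ (n * (x + 2)))).symm).eq,
      hCP (x + 2) (by omega), zero_mul]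
  rw [Finset.sum_eq_zero hterm, zero_add]
  simp only [zero_add, pow_one, pow_zero, one_pow, mul_one, one_mul, Nat.choose_one_right,
    Nat.choose_zero_right, Nat.cast_one]
  have hPc : c * P = P * c := ((hcomm c).symm).eq
  have hfin : P ^ n * c * P = P ^ (n + 1) * c := by
    rw [mul_assoc, hPc, ← mul_assoc, ← pow_succ]
  have h1c : P ^ (n + 1) * c = P ^ (n + 1) * a := by
    have e1 : P ^ (n + 1) * (P * b) = 0 := by
      rw [← mul_assoc, ← pow_succ, hPzero (n + 2) le_rfl, zero_mul]
    have e2 : P ^ (n + 1) * (P ^ (n + 1) * (a * b)) = 0 := by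
      rw [← mul_assoc, ← pow_add, hPzero (n + 1 + (n + 1)) (by omega), zero_mul]
    rw [hc, mul_add, mul_add, e1, e2, add_zero, add_zero]
  rw [hcast, hfin, h1c, add_comm]

lemma zmod_pow_cast_zero (m k : ℕ) (hk : 1 ≤ m) (hmk : m ≤ k) :
    (ℓ : ZMod (ℓ ^ m)) ^ k = 0 := by
  have h1 : ((ℓ ^ m : ℕ) : ZMod (ℓ ^ m)) = 0 := ZMod.natCast_self _
  calc (ℓ : ZMod (ℓ ^ m)) ^ k = (ℓ : ZMod (ℓ ^ m)) ^ m * (ℓ : ZMod (ℓ ^ m)) ^ (k - m) := by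
        rw [← pow_add]; congr 1; omega
    _ = 0 := by
        rw [show (ℓ : ZMod (ℓ ^ m)) ^ m = ((ℓ ^ m : ℕ) : ZMod (ℓ ^ m)) by
          push_cast; ring, h1, zero_mul]

lemma step_succ (G : Subgroup (GL (Fin 2) ℤ_[ℓ])) (n : ℕ) (hn : 1 ≤ n) (h2 : ℓ = 2 → 2 ≤ n)
    (hstep : ∀ z : GL (Fin 2) ℤ_[ℓ],
      z ∈ (glMap (PadicInt.toZModPow (p := ℓ) n)).ker →
        ∃ g ∈ G, z⁻¹ * g ∈ (glMap (PadicInt.toZModPow (p := ℓ) (n + 1))).ker) :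
    ∀ x : GL (Fin 2) ℤ_[ℓ], x ∈ (glMap (PadicInt.toZModPow (p := ℓ) (n + 1))).ker →
      ∃ g ∈ G, x⁻¹ * g ∈ (glMap (PadicInt.toZModPow (p := ℓ) (n + 2))).ker := by
  intro x hx
  have hℓp : ℓ.Prime := Fact.out
  rw [mem_K_iff] at hx
  set A : Matrix (Fin 2) (Fin 2) ℤ_[ℓ] := fun i j => (hx i j).choose with hAdef
  have hA : x.val = 1 + ((ℓ : ℤ_[ℓ]) ^ (n + 1)) • A := by
    ext i j
    have := (hx i j).choose_spec
    simp only [Matrix.add_apply, Matrix.smul_apply, smul_eq_mul]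
    rw [← this]
    ring
  set Y : Matrix (Fin 2) (Fin 2) ℤ_[ℓ] := 1 + ((ℓ : ℤ_[ℓ]) ^ n) • A with hYdef
  -- Y reduces to 1 modulo ℓ^m for every 1 ≤ m ≤ n
  have hYmap : ∀ m : ℕ, 1 ≤ m → m ≤ n → Y.map (PadicInt.toZModPow (p := ℓ) m) = 1 := by
    intro m hm0 hm
    rw [hYdef]
    have e0 : ((1 : Matrix (Fin 2) (Fin 2) ℤ_[ℓ]) + ((ℓ : ℤ_[ℓ]) ^ n) • A).map
        (PadicInt.toZModPow (p := ℓ) m)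
        = (PadicInt.toZModPow (p := ℓ) m).mapMatrix (1 + ((ℓ : ℤ_[ℓ]) ^ n) • A) := by
      rw [RingHom.mapMatrix_apply]
    rw [e0, map_add, map_one, RingHom.mapMatrix_apply, map_smul'', map_pow, map_natCast,
      zmod_pow_cast_zero m n hm0 hm, zero_smul, add_zero]
  have hℓ1 : Fact (1 < ℓ ^ 1) := ⟨by simpa using hℓp.one_lt⟩
  have hYunit : IsUnit Y := by
    rw [Matrix.isUnit_iff_isUnit_det]
    by_contra hu
    have hnorm : ‖Y.det‖ < 1 :=
      lt_of_le_of_ne (PadicInt.norm_le_one _) fun he => hu (PadicInt.isUnit_iff.2 he)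
    obtain ⟨w, hw⟩ := (PadicInt.norm_lt_one_iff_dvd _).1 hnorm
    have hd : (PadicInt.toZModPow (p := ℓ) 1) Y.det = 1 := by
      rw [RingHom.map_det, RingHom.mapMatrix_apply, hYmap 1 le_rfl hn, Matrix.det_one]
    have hz : (ℓ : ZMod (ℓ ^ 1)) = 0 := by
      have h9 := zmod_pow_cast_zero (ℓ := ℓ) 1 1 le_rfl le_rfl
      exact (pow_one ((ℓ : ZMod (ℓ ^ 1)))).symm.trans h9
    rw [hw, map_mul, map_natCast, hz, zero_mul] at hd
    exact one_ne_zero hd.symm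
  set y : GL (Fin 2) ℤ_[ℓ] := hYunit.unit with hy
  have hyval : y.val = Y := hYunit.unit_spec
  have hyK : y ∈ (glMap (PadicInt.toZModPow (p := ℓ) n)).ker := by
    rw [MonoidHom.mem_ker]
    refine Units.ext ?_
    rw [glMap_val, Units.val_one, hyval, hYmap n hn le_rfl]
  obtain ⟨g, hgG, hk⟩ := hstep y hyK
  refine ⟨g ^ ℓ, pow_mem hgG ℓ, ?_⟩
  rw [mem_K_iff] at hk
  set B : Matrix (Fin 2) (Fin 2) ℤ_[ℓ] := fun i j => (hk i j).choose with hBdef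
  have hB : (y⁻¹ * g).val = 1 + ((ℓ : ℤ_[ℓ]) ^ (n + 1)) • B := by
    ext i j
    have := (hk i j).choose_spec
    simp only [Matrix.add_apply, Matrix.smul_apply, smul_eq_mul]
    rw [show B i j = (hk i j).choose from rfl, ← this]
    ring
  have hg : g.val = Y * ((y⁻¹ * g).val) := by
    conv_lhs => rw [← mul_inv_cancel_left y g]
    rw [Units.val_mul, hyval]
  -- now pass to ZMod (ℓ ^ (n + 2))
  set f : ℤ_[ℓ] →+* ZMod (ℓ ^ (n + 2)) := PadicInt.toZModPow (p := ℓ) (n + 2) with hf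
  set P : Matrix (Fin 2) (Fin 2) (ZMod (ℓ ^ (n + 2))) := (ℓ : Matrix (Fin 2) (Fin 2) (ZMod (ℓ ^ (n + 2)))) with hP
  have hpow : ∀ m : ℕ,
      algebraMap (ZMod (ℓ ^ (n + 2))) (Matrix (Fin 2) (Fin 2) (ZMod (ℓ ^ (n + 2))))
        (f ((ℓ : ℤ_[ℓ]) ^ m)) = P ^ m := by
    intro m
    rw [map_pow, map_natCast, map_pow, map_natCast]
  have hmap_one_add : ∀ (r : ℤ_[ℓ]) (M : Matrix (Fin 2) (Fin 2) ℤ_[ℓ]),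
      ((1 + r • M : Matrix (Fin 2) (Fin 2) ℤ_[ℓ])).map f
        = 1 + (algebraMap (ZMod (ℓ ^ (n + 2))) (Matrix (Fin 2) (Fin 2) (ZMod (ℓ ^ (n + 2))))
            (f r)) * M.map f := by
    intro r M
    have e0 : ((1 + r • M : Matrix (Fin 2) (Fin 2) ℤ_[ℓ])).map f = f.mapMatrix (1 + r • M) := by
      rw [RingHom.mapMatrix_apply]
    rw [e0, map_add, map_one, RingHom.mapMatrix_apply, map_smul'', Algebra.smul_def]
  have hxmap : x.val.map f = 1 + P ^ (n + 1) * A.map f := by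
    rw [hA, hmap_one_add, hpow]
  have hYmap2 : Y.map f = 1 + P ^ n * A.map f := by
    rw [hYdef, hmap_one_add, hpow]
  have hkmap : ((y⁻¹ * g).val).map f = 1 + P ^ (n + 1) * B.map f := by
    rw [hB, hmap_one_add, hpow]
  have hgmap : g.val.map f = (1 + P ^ n * A.map f) * (1 + P ^ (n + 1) * B.map f) := by
    rw [hg, Matrix.map_mul, hYmap2, hkmap]
  have hP0 : P ^ (n + 2) = 0 := by
    rw [← hpow (n + 2), map_pow, map_natCast, zmod_pow_cast_zero (n + 2) (n + 2) (by omega) le_rfl,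
      map_zero]
  have hkey := key_pow (S := Matrix (Fin 2) (Fin 2) (ZMod (ℓ ^ (n + 2)))) hℓp hn h2
    P (A.map f) (B.map f) (fun s => Nat.cast_commute ℓ s) hP0 rfl
  rw [MonoidHom.mem_ker, map_mul, map_inv, inv_mul_eq_one]
  refine Units.ext ?_
  rw [glMap_val, map_pow, Units.val_pow_eq_pow_val, glMap_val, hgmap, hxmap, hkey]

lemma dvd_entries {m : ℕ} {x g : GL (Fin 2) ℤ_[ℓ]}
    (hm : x⁻¹ * g ∈ (glMap (PadicInt.toZModPow (p := ℓ) m)).ker) (i j : Fin 2) :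
    ((ℓ : ℤ_[ℓ]) ^ m) ∣ (g.val i j - x.val i j) := by
  rw [mem_K_iff] at hm
  have key : g.val - x.val = x.val * ((x⁻¹ * g).val - 1) := by
    rw [Matrix.mul_sub, mul_one, ← Units.val_mul, mul_inv_cancel_left]
  have h2 : (g.val - x.val) i j = ∑ k, x.val i k * ((x⁻¹ * g).val - 1) k j := by
    rw [key, Matrix.mul_apply]
  rw [show g.val i j - x.val i j = (g.val - x.val) i j from rfl, h2]
  refine Finset.dvd_sum fun k _ => Dvd.dvd.mul_left ?_ _
  simpa [Matrix.sub_apply] using hm k j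

lemma norm_le_of_dvd {m : ℕ} {z : ℤ_[ℓ]} (hz : ((ℓ : ℤ_[ℓ]) ^ m) ∣ z) :
    ‖z‖ ≤ (ℓ : ℝ) ^ (-(m : ℤ)) := by
  obtain ⟨w, rfl⟩ := hz
  rw [norm_mul, PadicInt.norm_p_pow]
  exact le_trans (mul_le_mul_of_nonneg_left (PadicInt.norm_le_one w) (by positivity))
    (le_of_eq (mul_one _))

lemma tendsto_val_of_K (β : ℕ) (u : ℕ → GL (Fin 2) ℤ_[ℓ]) (v : GL (Fin 2) ℤ_[ℓ])
    (hu : ∀ m, v⁻¹ * u m ∈ (glMap (PadicInt.toZModPow (p := ℓ) (β + m))).ker) :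
    Filter.Tendsto (fun m => (u m).val) Filter.atTop (nhds v.val) := by
  have hℓ2 : 2 ≤ ℓ := (Fact.out : ℓ.Prime).two_le
  refine tendsto_pi_nhds.2 ?_
  intro i
  rw [tendsto_pi_nhds]
  intro j
  rw [tendsto_iff_norm_sub_tendsto_zero]
  have hgeo : Filter.Tendsto (fun m : ℕ => ((ℓ : ℝ)⁻¹) ^ m) Filter.atTop (nhds 0) := by
    refine tendsto_pow_atTop_nhds_zero_of_lt_one (by positivity) ?_
    rw [inv_lt_one_iff₀]
    right
    exact one_lt_two.trans_le (by exact_mod_cast hℓ2)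
  have hcomp := hgeo.comp (Filter.tendsto_add_atTop_nat β)
  have hbound : Filter.Tendsto (fun m : ℕ => (ℓ : ℝ) ^ (-((β + m : ℕ) : ℤ))) Filter.atTop
      (nhds 0) := by
    refine hcomp.congr fun m => ?_
    simp only [Function.comp_apply]
    rw [zpow_neg, zpow_natCast, ← inv_pow, add_comm]
  exact squeeze_zero (fun m => norm_nonneg _)
    (fun m => norm_le_of_dvd (dvd_entries (hu m) i j)) hbound

lemma tendsto_of_K (β : ℕ) (x : GL (Fin 2) ℤ_[ℓ]) (g : ℕ → GL (Fin 2) ℤ_[ℓ])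
    (hg : ∀ m, x⁻¹ * g m ∈ (glMap (PadicInt.toZModPow (p := ℓ) (β + m))).ker) :
    Filter.Tendsto g Filter.atTop (nhds x) := by
  rw [Units.isEmbedding_embedProduct.tendsto_nhds_iff]
  have h1 := tendsto_val_of_K β g x hg
  have hg2 : ∀ m, (x⁻¹)⁻¹ * (g m)⁻¹ ∈ (glMap (PadicInt.toZModPow (p := ℓ) (β + m))).ker := by
    intro m
    rw [inv_inv]
    have hmem : (g m)⁻¹ * x ∈ (glMap (PadicInt.toZModPow (p := ℓ) (β + m))).ker := by
      have h8 := inv_mem (hg m)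
      rwa [mul_inv_rev, inv_inv] at h8
    have h9 := (MonoidHom.normal_ker _).conj_mem _ hmem x
    have e : x * ((g m)⁻¹ * x) * x⁻¹ = x * (g m)⁻¹ := by group
    rwa [e] at h9
  have h2 := tendsto_val_of_K β (fun m => (g m)⁻¹) x⁻¹ hg2
  have h2' := (MulOpposite.continuous_op.tendsto _).comp h2
  exact h1.prodMk_nhds h2'

lemma glMap_comp {R S T : Type*} [CommRing R] [CommRing S] [CommRing T] (f : S →+* T)
    (g : R →+* S) (u : GL (Fin 2) R) : glMap f (glMap g u) = glMap (f.comp g) u := by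
  refine Units.ext ?_
  rw [glMap_val, glMap_val, glMap_val, Matrix.map_map, RingHom.coe_comp]

lemma step_of_h (G : Subgroup (GL (Fin 2) ℤ_[ℓ])) (γ : ℕ)
    (hker : (glMap (ZMod.castHom (pow_dvd_pow ℓ (Nat.le_succ γ)) (ZMod (ℓ ^ γ)))).ker ≤
        Subgroup.map (glMap (PadicInt.toZModPow (p := ℓ) (γ + 1))) G) :
    ∀ z : GL (Fin 2) ℤ_[ℓ], z ∈ (glMap (PadicInt.toZModPow (p := ℓ) γ)).ker →
      ∃ g ∈ G, z⁻¹ * g ∈ (glMap (PadicInt.toZModPow (p := ℓ) (γ + 1))).ker := by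
  intro z hz
  have hw : glMap (PadicInt.toZModPow (p := ℓ) (γ + 1)) z ∈
      (glMap (ZMod.castHom (pow_dvd_pow ℓ (Nat.le_succ γ)) (ZMod (ℓ ^ γ)))).ker := by
    rw [MonoidHom.mem_ker, glMap_comp,
      PadicInt.zmod_cast_comp_toZModPow γ (γ + 1) (Nat.le_succ γ)]
    exact MonoidHom.mem_ker.1 hz
  obtain ⟨g, hgG, hgw⟩ := hker hw
  refine ⟨g, hgG, ?_⟩
  rw [MonoidHom.mem_ker, map_mul, map_inv, hgw, inv_mul_cancel]

end Aux

/-- Let `ℓ` be a prime, `G ⊆ GL₂(ℤ_ℓ)` a closed subgroup and `β ≥ 0`.  If for every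
`γ` with `β ≤ γ ≤ max {β, α_ℓ}` one has
`ker(GL₂(ℤ/ℓ^{γ+1}ℤ) → GL₂(ℤ/ℓ^γℤ)) ⊆ G(ℓ^{γ+1})`, then
`ker(GL₂(ℤ_ℓ) → GL₂(ℤ/ℓ^βℤ)) ⊆ G`. -/
theorem statement2 (ℓ : ℕ) [Fact ℓ.Prime] (G : Subgroup (GL (Fin 2) ℤ_[ℓ]))
    (hGclosed : IsClosed (G : Set (GL (Fin 2) ℤ_[ℓ]))) (β : ℕ)
    (h : ∀ γ : ℕ, β ≤ γ → γ ≤ max β (alphaExp ℓ) →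
      (glMap (ZMod.castHom (pow_dvd_pow ℓ (Nat.le_succ γ)) (ZMod (ℓ ^ γ)))).ker ≤
        Subgroup.map (glMap (PadicInt.toZModPow (p := ℓ) (γ + 1))) G) :
    (glMap (PadicInt.toZModPow (p := ℓ) β)).ker ≤ G := by
  intro x hx
  set M := max β (alphaExp ℓ) with hM
  have halpha : 1 ≤ alphaExp ℓ := by unfold alphaExp; split <;> omega
  have hstepM : ∀ j : ℕ, ∀ z : GL (Fin 2) ℤ_[ℓ],
      z ∈ (glMap (PadicInt.toZModPow (p := ℓ) (M + j))).ker →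
      ∃ g ∈ G, z⁻¹ * g ∈ (glMap (PadicInt.toZModPow (p := ℓ) (M + j + 1))).ker := by
    intro j
    induction j with
    | zero => simpa using step_of_h G M (h M (le_max_left _ _) le_rfl)
    | succ j ih =>
        have hn : 1 ≤ M + j :=
          le_trans (le_trans halpha (le_max_right _ _)) (Nat.le_add_right _ _)
        have h2 : ℓ = 2 → 2 ≤ M + j := by
          intro hl
          have e2 : alphaExp ℓ = 2 := by unfold alphaExp; simp [hl]
          have := le_max_right β (alphaExp ℓ)
          omega
        exact step_succ G (M + j) hn h2 ih
  have hstep : ∀ n : ℕ, β ≤ n → ∀ z : GL (Fin 2) ℤ_[ℓ],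
      z ∈ (glMap (PadicInt.toZModPow (p := ℓ) n)).ker →
      ∃ g ∈ G, z⁻¹ * g ∈ (glMap (PadicInt.toZModPow (p := ℓ) (n + 1))).ker := by
    intro n hn
    by_cases hnM : n ≤ M
    · exact step_of_h G n (h n hn hnM)
    · obtain ⟨j, rfl⟩ : ∃ j, n = M + j := ⟨n - M, by omega⟩
      exact hstepM j
  have hchain : ∀ m : ℕ, ∃ g ∈ G,
      x⁻¹ * g ∈ (glMap (PadicInt.toZModPow (p := ℓ) (β + m))).ker := by
    intro m
    induction m with
    | zero => exact ⟨1, one_mem G, by rw [mul_one]; exact inv_mem hx⟩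
    | succ m ih =>
        obtain ⟨g, hgG, hgK⟩ := ih
        obtain ⟨g', hg'G, hg'K⟩ := hstep (β + m) (Nat.le_add_right _ _) (x⁻¹ * g) hgK
        refine ⟨g * g'⁻¹, mul_mem hgG (inv_mem hg'G), ?_⟩
        have h1 := inv_mem hg'K
        have h9 := (MonoidHom.normal_ker _).conj_mem _ h1 (x⁻¹ * g)
        have e : (x⁻¹ * g) * (((x⁻¹ * g)⁻¹ * g')⁻¹) * (x⁻¹ * g)⁻¹ = x⁻¹ * (g * g'⁻¹) := by
          group
        rwa [e] at h9
  choose g hgG hgK using hchain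
  exact hGclosed.mem_of_tendsto (tendsto_of_K β x g hgK) (Filter.Eventually.of_forall hgG)
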